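/- arXiv:2406.17689 — 3 statements merged into one kernel-verified Lean document; each statement's English description precedes it below -/
import Mathlib

section
/- Fix p ∈ (0, 1/2), θ > 0, and an integer t ≥ 0. Then for all sufficiently large d (depending on p, θ, t) and all N with log₂(N)/d ≥ 1 − H₂(p) + θ, the following holds: for every map G : {0, ..., N−1} → 𝔽₂^d and every map Dec : 𝔽₂^d → {0, ..., N−1}, there exists j ∈ {0, ..., N−1} such that Pr_{η ∼ Ber(p)^d}[ |j − Dec(G(j) ⊕ η)| > t ] ≥ 0.99. -/
open MeasureTheory

noncomputable instance : MeasurableSpace (ZMod 2) := ⊤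

/-- The Bernoulli(p) measure on 𝔽₂: mass p on 1 and 1-p on 0. -/
noncomputable def bern (p : ℝ) : Measure (ZMod 2) :=
  ENNReal.ofReal (1 - p) • Measure.dirac 0 + ENNReal.ofReal p • Measure.dirac 1

/-- The product (i.i.d.) Bernoulli(p) measure on 𝔽₂^ι, i.e. the law of η ∼ Ber(p)^ι. -/
noncomputable def bernPi (p : ℝ) (ι : Type) [Fintype ι] : Measure (ι → ZMod 2) :=
  Measure.pi fun _ => bern p

/-- The binary entropy function H₂(p) = -p log₂ p - (1-p) log₂ (1-p). -/
noncomputable def H2 (p : ℝ) : ℝ := -p * Real.logb 2 p - (1 - p) * Real.logb 2 (1 - p)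

namespace Stmt2Aux

open Finset

instance : MeasurableSingletonClass (ZMod 2) := ⟨fun _ => MeasurableSpace.measurableSet_top⟩

instance (p : ℝ) : IsFiniteMeasure (bern p) := by
  constructor
  rw [bern]
  simp [lt_top_iff_ne_top]

lemma measure_finset {α : Type*} [MeasurableSpace α] [MeasurableSingletonClass α]
    (s : Finset α) (μ : Measure α) : μ ↑s = ∑ x ∈ s, μ {x} := by
  have h : (↑s : Set α) = ⋃ x ∈ s, {x} := (Set.biUnion_of_singleton _).symm
  rw [h, measure_biUnion_finset]
  · intro x _ y _ hxy
    simp [Function.onFun, Set.disjoint_singleton, hxy]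
  · exact fun b _ => measurableSet_singleton b

lemma bern_singleton (p : ℝ) (a : ZMod 2) :
    bern p {a} = ENNReal.ofReal (if a = 1 then p else 1 - p) := by
  have h01 : (0 : ZMod 2) ≠ 1 := by decide
  rcases (show a = 0 ∨ a = 1 by revert a; decide) with rfl | rfl <;>
    simp [bern, Measure.dirac_apply' _ (MeasurableSpace.measurableSet_top),
      Set.indicator, h01, h01.symm]

/-- The probability weight of a noise vector. -/
noncomputable def W (p : ℝ) (d : ℕ) (η : Fin d → ZMod 2) : ℝ :=
  ∏ i, (if η i = 1 then p else 1 - p)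

lemma W_nonneg {p : ℝ} (hp0 : 0 ≤ p) (hp1 : p ≤ 1) (d : ℕ) (η : Fin d → ZMod 2) :
    0 ≤ W p d η :=
  Finset.prod_nonneg fun i _ => by split <;> [exact hp0; linarith]

lemma bernPi_singleton (p : ℝ) (hp0 : 0 ≤ p) (hp1 : p ≤ 1) (d : ℕ) (η : Fin d → ZMod 2) :
    bernPi p (Fin d) {η} = ENNReal.ofReal (W p d η) := by
  have h : ({η} : Set (Fin d → ZMod 2)) = Set.pi Set.univ (fun i => {η i}) := by
    rw [Set.univ_pi_singleton]
  rw [bernPi, h, Measure.pi_pi]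
  simp only [bern_singleton]
  rw [W, ← ENNReal.ofReal_prod_of_nonneg]
  intro i _
  split <;> [exact hp0; linarith]

lemma bernPi_set (p : ℝ) (hp0 : 0 ≤ p) (hp1 : p ≤ 1) (d : ℕ) (S : Set (Fin d → ZMod 2)) :
    bernPi p (Fin d) S = ENNReal.ofReal (∑ η ∈ (Set.toFinite S).toFinset, W p d η) := by
  calc bernPi p (Fin d) S = bernPi p (Fin d) ↑(Set.toFinite S).toFinset := by
        rw [(Set.toFinite S).coe_toFinset]
    _ = ∑ η ∈ (Set.toFinite S).toFinset, bernPi p (Fin d) {η} := measure_finset _ _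
    _ = ∑ η ∈ (Set.toFinite S).toFinset, ENNReal.ofReal (W p d η) :=
        Finset.sum_congr rfl fun η _ => bernPi_singleton p hp0 hp1 d η
    _ = ENNReal.ofReal (∑ η ∈ (Set.toFinite S).toFinset, W p d η) :=
        (ENNReal.ofReal_sum_of_nonneg fun η _ => W_nonneg hp0 hp1 d η).symm

lemma sum_prod_eq_prod_sum {d : ℕ} (h : Fin d → ZMod 2 → ℝ) :
    ∑ η : Fin d → ZMod 2, ∏ i, h i (η i) = ∏ i, ∑ a : ZMod 2, h i a := by
  rw [Finset.prod_univ_sum, Fintype.piFinset_univ]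

lemma zmod2_sum (f : ZMod 2 → ℝ) : ∑ a, f a = f 0 + f 1 := by
  rw [show (univ : Finset (ZMod 2)) = {0, 1} from by decide,
    Finset.sum_pair (by decide)]

lemma sum_W (p : ℝ) (d : ℕ) : ∑ η : Fin d → ZMod 2, W p d η = 1 := by
  simp only [W]
  rw [sum_prod_eq_prod_sum (fun i a => if a = 1 then p else 1 - p)]
  have h1 : ∑ a : ZMod 2, (if a = 1 then p else 1 - p) = 1 := by
    rw [zmod2_sum]; norm_num
  simp [h1]

lemma second_moment (p : ℝ) (d : ℕ) :
    ∑ η : Fin d → ZMod 2, W p d η * (∑ i, ((if η i = 1 then (1:ℝ) else 0) - p))^2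
      = d * (p * (1 - p)) := by
  set w : ZMod 2 → ℝ := fun a => if a = 1 then p else 1 - p with hw
  set f : ZMod 2 → ℝ := fun a => (if a = 1 then (1:ℝ) else 0) - p with hf
  have S0 : ∑ a, w a = 1 := by rw [zmod2_sum]; simp [hw]
  have S1 : ∑ a, w a * f a = 0 := by rw [zmod2_sum]; simp [hw, hf]; ring
  have S2 : ∑ a, w a * (f a * f a) = p * (1 - p) := by rw [zmod2_sum]; simp [hw, hf]; ring
  have key : ∀ i j : Fin d,
      (∑ η : Fin d → ZMod 2, W p d η * (f (η i) * f (η j)))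
        = if i = j then p * (1 - p) else 0 := by
    intro i j
    have hpt : ∀ η : Fin d → ZMod 2, W p d η * (f (η i) * f (η j)) =
        ∏ k, (w (η k) * ((if k = i then f (η k) else 1) * (if k = j then f (η k) else 1))) := by
      intro η
      rw [Finset.prod_mul_distrib, Finset.prod_mul_distrib]
      simp [W, hw, Finset.prod_ite_eq', mul_assoc]
    rw [Finset.sum_congr rfl fun η _ => hpt η,
      sum_prod_eq_prod_sum (fun k a => w a * ((if k = i then f a else 1) * (if k = j then f a else 1)))]
    by_cases hij : i = j
    · subst hij
      rw [if_pos rfl]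
      rw [Finset.prod_eq_single i]
      · simpa using S2
      · intro k _ hk
        simp only [if_neg hk, mul_one, one_mul]
        exact S0
      · simp
    · rw [if_neg hij]
      apply Finset.prod_eq_zero (Finset.mem_univ i)
      simpa [hij] using S1
  calc ∑ η : Fin d → ZMod 2, W p d η * (∑ i, f (η i))^2
      = ∑ η : Fin d → ZMod 2, ∑ i, ∑ j, W p d η * (f (η i) * f (η j)) := by
        apply Finset.sum_congr rfl; intro η _
        rw [sq, Finset.sum_mul_sum, Finset.mul_sum]
        apply Finset.sum_congr rfl; intro i _
        rw [Finset.mul_sum]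
    _ = ∑ i, ∑ j, ∑ η : Fin d → ZMod 2, W p d η * (f (η i) * f (η j)) := by
        rw [Finset.sum_comm]
        apply Finset.sum_congr rfl; intro i _
        rw [Finset.sum_comm]
    _ = ∑ i : Fin d, ∑ j : Fin d, (if i = j then p * (1 - p) else 0) := by
        simp only [key]
    _ = d * (p * (1 - p)) := by simp [Finset.sum_ite_eq]

/-- The number of ones in a noise vector, as a real number. -/
noncomputable def X (d : ℕ) (η : Fin d → ZMod 2) : ℝ := ∑ i, (if η i = 1 then (1:ℝ) else 0)

lemma low_sum_le {p ε : ℝ} (hp0 : 0 < p) (hp1 : p < 1) (hε : 0 < ε) {d : ℕ} (hd : 0 < d) :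
    ∑ η ∈ univ.filter (fun η : Fin d → ZMod 2 => X d η < (p - ε) * d), W p d η
      ≤ p * (1 - p) / (ε ^ 2 * d) := by
  have hW : ∀ η : Fin d → ZMod 2, 0 ≤ W p d η := W_nonneg hp0.le hp1.le d
  have hXd : ∀ η : Fin d → ZMod 2,
      (∑ i, ((if η i = 1 then (1:ℝ) else 0) - p)) = X d η - p * d := by
    intro η
    rw [Finset.sum_sub_distrib, Finset.sum_const, card_univ, Fintype.card_fin, X,
      nsmul_eq_mul]
    ring
  have key : (∑ η ∈ univ.filter (fun η : Fin d → ZMod 2 => X d η < (p - ε) * d), W p d η)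
      * (ε * d) ^ 2 ≤ d * (p * (1 - p)) := by
    rw [Finset.sum_mul]
    calc ∑ η ∈ univ.filter (fun η : Fin d → ZMod 2 => X d η < (p - ε) * d),
          W p d η * (ε * d) ^ 2
        ≤ ∑ η ∈ univ.filter (fun η : Fin d → ZMod 2 => X d η < (p - ε) * d),
          W p d η * (X d η - p * d) ^ 2 := by
          apply Finset.sum_le_sum
          intro η hη
          rw [Finset.mem_filter] at hη
          apply mul_le_mul_of_nonneg_left _ (hW η)
          have h1 : X d η - p * d < -(ε * d) := by
            have := hη.2; nlinarith
          have h2 : 0 < ε * d := by positivity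
          have h3 : ε * d ≤ p * d - X d η := by linarith
          calc (ε * d)^2 ≤ (p * d - X d η)^2 := pow_le_pow_left₀ h2.le h3 2
            _ = (X d η - p * d)^2 := by ring
      _ ≤ ∑ η : Fin d → ZMod 2, W p d η * (X d η - p * d) ^ 2 := by
          apply Finset.sum_le_sum_of_subset_of_nonneg (Finset.filter_subset _ _)
          intro η _ _
          exact mul_nonneg (hW η) (sq_nonneg _)
      _ = d * (p * (1 - p)) := by
          rw [← second_moment p d]
          apply Finset.sum_congr rfl
          intro η _
          rw [hXd η]
  have hpos : (0:ℝ) < (ε * d) ^ 2 := by positivity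
  rw [← le_div_iff₀ hpos] at key
  calc _ ≤ (d:ℝ) * (p * (1 - p)) / (ε * d) ^ 2 := key
    _ = p * (1 - p) / (ε ^ 2 * d) := by
        have hd' : (d:ℝ) ≠ 0 := Nat.cast_ne_zero.mpr hd.ne'
        field_simp

lemma W_le_high {p ε : ℝ} (hp0 : 0 < p) (hp1 : p < 1/2) {d : ℕ} (η : Fin d → ZMod 2)
    (hX : (p - ε) * d ≤ X d η) :
    W p d η ≤ (1 - p) ^ d * (p / (1 - p)) ^ ((p - ε) * (d:ℝ)) := by
  have h1p : (0:ℝ) < 1 - p := by linarith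
  set k := (univ.filter (fun i : Fin d => η i = 1)).card with hk
  have hXk : X d η = k := by
    rw [X, Finset.sum_boole, hk]
  have hkd : k ≤ d := by
    calc k ≤ (univ : Finset (Fin d)).card := Finset.card_filter_le _ _
      _ = d := by simp
  have hWeq : W p d η = p ^ k * (1 - p) ^ (d - k) := by
    rw [W, ← Finset.prod_filter_mul_prod_filter_not univ (fun i => η i = 1)]
    rw [Finset.prod_congr rfl (fun i hi => if_pos (Finset.mem_filter.mp hi).2),
      Finset.prod_congr rfl (fun i hi => if_neg (Finset.mem_filter.mp hi).2),
      Finset.prod_const, Finset.prod_const]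
    congr 1
    rw [Finset.filter_not, Finset.card_sdiff_of_subset (Finset.filter_subset _ _)]
    simp [hk]
  have hWeq2 : W p d η = (1 - p) ^ d * (p / (1 - p)) ^ k := by
    rw [hWeq, div_pow, show d = (d - k) + k by omega, pow_add]
    field_simp
    rw [Nat.add_sub_cancel]
  rw [hWeq2]
  apply mul_le_mul_of_nonneg_left _ (by positivity)
  rw [← Real.rpow_natCast (p / (1-p)) k]
  apply Real.rpow_le_rpow_of_exponent_ge (by positivity)
  · rw [div_le_one h1p]; linarith
  · rw [← hXk]; exact hX

lemma count_le (N tt d : ℕ) (G : ℕ → Fin d → ZMod 2) (Dec : (Fin d → ZMod 2) → ℕ) :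
    ∑ j ∈ range N,
      (univ.filter (fun η : Fin d → ZMod 2 => ¬ ((tt:ℝ) < |(j:ℝ) - (Dec (G j + η) : ℝ)|))).card
      ≤ (2 * tt + 1) * 2 ^ d := by
  have hinv : ∀ (c x : Fin d → ZMod 2), c + (c + x) = x := by
    intro c x; funext i
    have : ∀ a b : ZMod 2, a + (a + b) = b := by decide
    exact this (c i) (x i)
  have step1 : ∀ j : ℕ, (univ.filter (fun η : Fin d → ZMod 2 =>
      ¬ ((tt:ℝ) < |(j:ℝ) - (Dec (G j + η) : ℝ)|))).card
      = (univ.filter (fun x : Fin d → ZMod 2 =>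
      ¬ ((tt:ℝ) < |(j:ℝ) - (Dec x : ℝ)|))).card := by
    intro j
    apply Finset.card_bij' (fun η _ => G j + η) (fun x _ => G j + x)
    · intro η hη
      rw [Finset.mem_filter] at hη ⊢
      exact ⟨Finset.mem_univ _, hη.2⟩
    · intro x hx
      rw [Finset.mem_filter] at hx ⊢
      exact ⟨Finset.mem_univ _, by rw [hinv]; exact hx.2⟩
    · intro η _; exact hinv _ _
    · intro x _; exact hinv _ _
  calc ∑ j ∈ range N, (univ.filter (fun η : Fin d → ZMod 2 =>
        ¬ ((tt:ℝ) < |(j:ℝ) - (Dec (G j + η) : ℝ)|))).card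
      = ∑ j ∈ range N, (univ.filter (fun x : Fin d → ZMod 2 =>
        ¬ ((tt:ℝ) < |(j:ℝ) - (Dec x : ℝ)|))).card := Finset.sum_congr rfl fun j _ => step1 j
    _ = ∑ j ∈ range N, ∑ x : Fin d → ZMod 2,
        (if ¬ ((tt:ℝ) < |(j:ℝ) - (Dec x : ℝ)|) then 1 else 0) := by
        apply Finset.sum_congr rfl; intro j _
        rw [Finset.card_filter]
    _ = ∑ x : Fin d → ZMod 2, ∑ j ∈ range N,
        (if ¬ ((tt:ℝ) < |(j:ℝ) - (Dec x : ℝ)|) then 1 else 0) := Finset.sum_comm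
    _ ≤ ∑ x : Fin d → ZMod 2, (2 * tt + 1) := by
        apply Finset.sum_le_sum
        intro x _
        rw [← Finset.card_filter]
        calc ((range N).filter fun j : ℕ => ¬ ((tt:ℝ) < |(j:ℝ) - (Dec x : ℝ)|)).card
            ≤ (Finset.Icc (Dec x - tt) (Dec x + tt)).card := by
              apply Finset.card_le_card
              intro j hj
              rw [Finset.mem_filter, not_lt, abs_le] at hj
              obtain ⟨-, h1, h2⟩ := hj
              have hA : (j:ℝ) ≤ (Dec x : ℝ) + (tt:ℝ) := by linarith
              have hB : (Dec x : ℝ) ≤ (j:ℝ) + (tt:ℝ) := by linarith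
              have hA' : j ≤ Dec x + tt := by exact_mod_cast hA
              have hB' : Dec x ≤ j + tt := by exact_mod_cast hB
              rw [Finset.mem_Icc]
              omega
          _ ≤ 2 * tt + 1 := by
              rw [Nat.card_Icc]
              omega
    _ = (2 * tt + 1) * 2 ^ d := by
        rw [Finset.sum_const, card_univ]
        have : Fintype.card (Fin d → ZMod 2) = 2 ^ d := by
          rw [Fintype.card_fun]
          simp
        rw [this, smul_eq_mul, mul_comm]

lemma H2_le_one {p : ℝ} (hp0 : 0 < p) (hp1 : p < 1) : H2 p ≤ 1 := by
  have hlog2 : 0 < Real.log 2 := Real.log_pos one_lt_two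
  have hH : H2 p = Real.binEntropy p / Real.log 2 := by
    rw [H2, Real.binEntropy, Real.log_inv, Real.log_inv, Real.logb, Real.logb]
    field_simp
    ring
  rw [hH, div_le_one hlog2]
  exact Real.binEntropy_le_log_two

end Stmt2Aux

open Stmt2Aux Finset in
theorem stmt2 (p : ℝ) (hp0 : 0 < p) (hp1 : p < 1 / 2) (θ : ℝ) (hθ : 0 < θ) (t : ℕ) :
    -- for all sufficiently large d (depending on p, θ, t)
    ∃ d₀ : ℕ, ∀ d : ℕ, d₀ ≤ d →
    -- and all N with log₂(N)/d ≥ 1 - H₂(p) + θ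
    ∀ N : ℕ, 1 - H2 p + θ ≤ Real.logb 2 (N : ℝ) / (d : ℝ) →
    -- for every encoder G and decoder Dec
    ∀ G : ℕ → Fin d → ZMod 2, ∀ Dec : (Fin d → ZMod 2) → ℕ, (∀ x, Dec x < N) →
    -- there is a message j on which the decoder errs by more than t w.p. ≥ 0.99
    ∃ j : ℕ, j < N ∧
      ENNReal.ofReal 0.99 ≤
        bernPi p (Fin d) {η | (t : ℝ) < |(j : ℝ) - (Dec (G j + η) : ℝ)|} := by
  have hp1' : p < 1 := by linarith
  have h1p : (0:ℝ) < 1 - p := by linarith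
  have hlog2 : 0 < Real.log 2 := Real.log_pos one_lt_two
  -- constants
  set C : ℝ := Real.logb 2 ((1 - p) / p) with hC_def
  have hC : 0 < C := Real.logb_pos one_lt_two (by rw [lt_div_iff₀ hp0]; linarith)
  set ε : ℝ := θ / (2 * C) with hε_def
  have hε : 0 < ε := by positivity
  have hεC : ε * C = θ / 2 := by
    rw [hε_def]; field_simp
  refine ⟨max 1 (max ⌈p * (1 - p) / (0.005 * ε ^ 2)⌉₊ ⌈400 * (2 * t + 1) / (θ * Real.log 2)⌉₊),
    fun d hd N hN G Dec hDec => ?_⟩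
  have hd1 : 1 ≤ d := le_trans (le_max_left _ _) hd
  have hdR : (0:ℝ) < d := by exact_mod_cast hd1
  have hdA : p * (1 - p) / (0.005 * ε ^ 2) ≤ (d:ℝ) := by
    refine le_trans (Nat.le_ceil _) ?_
    exact_mod_cast le_trans (le_trans (le_max_left _ _) (le_max_right _ _)) hd
  have hdB : 400 * (2 * (t:ℝ) + 1) / (θ * Real.log 2) ≤ (d:ℝ) := by
    refine le_trans (Nat.le_ceil _) ?_
    have := le_trans (le_trans (le_max_right _ _) (le_max_right _ _)) hd
    exact_mod_cast this
  have hH2 : H2 p ≤ 1 := H2_le_one hp0 hp1'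
  -- N is large
  have hN0 : N ≠ 0 := by
    intro h
    rw [h] at hN
    simp only [Nat.cast_zero, Real.logb_zero, zero_div] at hN
    linarith
  have hNR : (0:ℝ) < N := by positivity
  have hNge : (2:ℝ) ^ ((1 - H2 p + θ) * d) ≤ (N:ℝ) := by
    have h1 : (1 - H2 p + θ) * d ≤ Real.logb 2 N := by
      rw [← le_div_iff₀ hdR]; exact hN
    calc (2:ℝ) ^ ((1 - H2 p + θ) * d) ≤ (2:ℝ) ^ (Real.logb 2 N) :=
          Real.rpow_le_rpow_of_exponent_le one_le_two h1
      _ = N := Real.rpow_logb two_pos (by norm_num) hNR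
  -- the "success" finsets
  set Succ : ℕ → Finset (Fin d → ZMod 2) := fun j =>
    univ.filter (fun η => ¬ ((t:ℝ) < |(j:ℝ) - (Dec (G j + η) : ℝ)|)) with hSucc_def
  set q : ℝ := (1 - p) ^ d * (p / (1 - p)) ^ ((p - ε) * (d:ℝ)) with hq_def
  have hq0 : 0 ≤ q := by positivity
  -- per-message bound
  have bound_j : ∀ j : ℕ, ∑ η ∈ Succ j, W p d η
      ≤ p * (1 - p) / (ε ^ 2 * d) + q * (Succ j).card := by
    intro j
    rw [← Finset.sum_filter_add_sum_filter_not (Succ j) (fun η => X d η < (p - ε) * d)]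
    have hA : ∑ η ∈ (Succ j).filter (fun η => X d η < (p - ε) * d), W p d η
        ≤ p * (1 - p) / (ε ^ 2 * d) := by
      refine le_trans ?_ (low_sum_le hp0 hp1' hε (by omega))
      apply Finset.sum_le_sum_of_subset_of_nonneg
      · exact Finset.filter_subset_filter _ (Finset.subset_univ _)
      · intro η _ _; exact W_nonneg hp0.le hp1'.le d η
    have hB : ∑ η ∈ (Succ j).filter (fun η => ¬ (X d η < (p - ε) * d)), W p d η
        ≤ q * (Succ j).card := by
      calc ∑ η ∈ (Succ j).filter (fun η => ¬ (X d η < (p - ε) * d)), W p d η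
          ≤ ((Succ j).filter (fun η => ¬ (X d η < (p - ε) * d))).card • q := by
            apply Finset.sum_le_card_nsmul
            intro η hη
            rw [Finset.mem_filter, not_lt] at hη
            exact W_le_high hp0 hp1 η hη.2
        _ = ((Succ j).filter (fun η => ¬ (X d η < (p - ε) * d))).card * q := by
            rw [nsmul_eq_mul]
        _ ≤ (Succ j).card * q := by
            apply mul_le_mul_of_nonneg_right _ hq0
            exact_mod_cast Finset.card_filter_le _ _
        _ = q * (Succ j).card := by ring
    linarith
  -- total bound
  have total : ∑ j ∈ range N, ∑ η ∈ Succ j, W p d η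
      ≤ N * (p * (1 - p) / (ε ^ 2 * d)) + q * ((2 * t + 1) * 2 ^ d) := by
    calc ∑ j ∈ range N, ∑ η ∈ Succ j, W p d η
        ≤ ∑ j ∈ range N, (p * (1 - p) / (ε ^ 2 * d) + q * (Succ j).card) :=
          Finset.sum_le_sum fun j _ => bound_j j
      _ = N * (p * (1 - p) / (ε ^ 2 * d)) + q * ∑ j ∈ range N, ((Succ j).card : ℝ) := by
          rw [Finset.sum_add_distrib, Finset.sum_const, Finset.card_range, nsmul_eq_mul,
            ← Finset.mul_sum]
      _ ≤ N * (p * (1 - p) / (ε ^ 2 * d)) + q * ((2 * t + 1) * 2 ^ d) := by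
          have hcount : (∑ j ∈ range N, ((Succ j).card : ℝ)) ≤ (((2 * t + 1) * 2 ^ d : ℕ) : ℝ) := by
            rw [← Nat.cast_sum]
            exact Nat.cast_le.mpr (count_le N t d G Dec)
          have h2 := mul_le_mul_of_nonneg_left hcount hq0
          push_cast at h2
          push_cast
          linarith
  -- first term small
  have small1 : p * (1 - p) / (ε ^ 2 * d) ≤ 0.005 := by
    rw [div_le_iff₀ (by positivity)]
    rw [div_le_iff₀ (by positivity)] at hdA
    nlinarith [sq_nonneg ε]
  -- second term small: q * 2^d * (2t+1) ≤ 0.005 * N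
  have hexp : q * (2:ℝ) ^ ((d:ℝ)) = (2:ℝ) ^ ((1 - H2 p + θ/2) * d) := by
    have e1 : ((1:ℝ) - p) ^ d = (2:ℝ) ^ (Real.logb 2 (1 - p) * (d:ℝ)) := by
      rw [Real.rpow_mul (by norm_num : (0:ℝ) ≤ 2), Real.rpow_logb two_pos (by norm_num) h1p,
        Real.rpow_natCast]
    have e2 : (p / (1 - p)) ^ ((p - ε) * (d:ℝ))
        = (2:ℝ) ^ (Real.logb 2 (p / (1 - p)) * ((p - ε) * (d:ℝ))) := by
      rw [Real.rpow_mul (by norm_num : (0:ℝ) ≤ 2), Real.rpow_logb two_pos (by norm_num)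
        (by positivity : (0:ℝ) < p / (1-p))]
    rw [hq_def, e1, e2, ← Real.rpow_add two_pos, ← Real.rpow_add two_pos]
    congr 1
    have hlp : Real.logb 2 (p / (1 - p)) = Real.logb 2 p - Real.logb 2 (1 - p) :=
      Real.logb_div hp0.ne' h1p.ne'
    have hlC : C = Real.logb 2 (1 - p) - Real.logb 2 p := by
      rw [hC_def, Real.logb_div h1p.ne' hp0.ne']
    have hH2e : H2 p = -p * Real.logb 2 p - (1 - p) * Real.logb 2 (1 - p) := rfl
    have hεC' : ε * (Real.logb 2 (1 - p) - Real.logb 2 p) = θ / 2 := by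
      rw [← hlC]; exact hεC
    rw [hlp, hH2e]
    linear_combination (d:ℝ) * hεC'
  have small2 : q * ((2 * (t:ℝ) + 1) * 2 ^ d) ≤ 0.005 * N := by
    have h2d : ((2:ℝ) ^ d : ℝ) = (2:ℝ) ^ ((d:ℝ)) := by
      rw [← Real.rpow_natCast 2 d]
    have key : (2 * (t:ℝ) + 1) ≤ 0.005 * (2:ℝ) ^ ((θ/2) * d) := by
      have hexp' : (θ/2) * d * Real.log 2 + 1 ≤ Real.exp ((θ/2) * d * Real.log 2) :=
        Real.add_one_le_exp _
      have h2r : (2:ℝ) ^ ((θ/2) * (d:ℝ)) = Real.exp ((θ/2) * d * Real.log 2) := by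
        rw [Real.rpow_def_of_pos two_pos, mul_comm]
      rw [h2r]
      have hd' : 400 * (2 * (t:ℝ) + 1) ≤ (d:ℝ) * (θ * Real.log 2) := by
        rw [div_le_iff₀ (by positivity)] at hdB
        linarith
      nlinarith
    have hsplit : (2:ℝ) ^ ((1 - H2 p + θ) * d)
        = (2:ℝ) ^ ((1 - H2 p + θ/2) * d) * (2:ℝ) ^ ((θ/2) * d) := by
      rw [← Real.rpow_add two_pos]
      congr 1
      ring
    calc q * ((2 * (t:ℝ) + 1) * 2 ^ d)
        = (q * (2:ℝ) ^ ((d:ℝ))) * (2 * (t:ℝ) + 1) := by rw [← h2d]; ring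
      _ = (2:ℝ) ^ ((1 - H2 p + θ/2) * d) * (2 * (t:ℝ) + 1) := by rw [hexp]
      _ ≤ (2:ℝ) ^ ((1 - H2 p + θ/2) * d) * (0.005 * (2:ℝ) ^ ((θ/2) * d)) := by
          apply mul_le_mul_of_nonneg_left key (by positivity)
      _ = 0.005 * (2:ℝ) ^ ((1 - H2 p + θ) * d) := by rw [hsplit]; ring
      _ ≤ 0.005 * N := mul_le_mul_of_nonneg_left hNge (by norm_num)
  -- conclude: some j has small success probability
  have total' : ∑ j ∈ range N, ∑ η ∈ Succ j, W p d η ≤ ∑ j ∈ range N, (0.01 : ℝ) := by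
    rw [Finset.sum_const, Finset.card_range, nsmul_eq_mul]
    calc ∑ j ∈ range N, ∑ η ∈ Succ j, W p d η
        ≤ N * (p * (1 - p) / (ε ^ 2 * d)) + q * ((2 * t + 1) * 2 ^ d) := total
      _ ≤ N * 0.005 + 0.005 * N := by
          have h1 : (N:ℝ) * (p * (1 - p) / (ε ^ 2 * d)) ≤ N * 0.005 :=
            mul_le_mul_of_nonneg_left small1 hNR.le
          have h2 := small2
          push_cast at h2 ⊢
          linarith
      _ = N * 0.01 := by ring
  obtain ⟨j, hjmem, hj⟩ := Finset.exists_le_of_sum_le ⟨0, Finset.mem_range.mpr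
    (Nat.pos_of_ne_zero hN0)⟩ total'
  rw [Finset.mem_range] at hjmem
  refine ⟨j, hjmem, ?_⟩
  -- compute the measure of the failure set
  set S : Set (Fin d → ZMod 2) := {η | (t : ℝ) < |(j : ℝ) - (Dec (G j + η) : ℝ)|} with hS_def
  rw [bernPi_set p hp0.le hp1'.le d S]
  apply ENNReal.ofReal_le_ofReal
  have hFeq : (Set.toFinite S).toFinset
      = univ.filter (fun η : Fin d → ZMod 2 => (t:ℝ) < |(j:ℝ) - (Dec (G j + η) : ℝ)|) := by
    ext η
    simp [Set.Finite.mem_toFinset, hS_def]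
  rw [hFeq]
  have hsplit := Finset.sum_filter_add_sum_filter_not (univ : Finset (Fin d → ZMod 2))
    (fun η => (t:ℝ) < |(j:ℝ) - (Dec (G j + η) : ℝ)|) (W p d)
  rw [sum_W p d] at hsplit
  have : ∑ η ∈ univ.filter (fun η : Fin d → ZMod 2 =>
      ¬ ((t:ℝ) < |(j:ℝ) - (Dec (G j + η) : ℝ)|)), W p d η ≤ 0.01 := hj
  norm_num at this hsplit ⊢
  linarith
end

section
/- Fix p ∈ (0, 1/2). There exist constants c > 0 and t₀ > 0 (depending only on p) such that for every integer ℓ ≥ 1, every j ∈ {0, ..., ℓ}, and every t ≥ t₀ the following holds. Let u = 1^j 0^{ℓ−j} ∈ 𝔽₂^ℓ be the unary encoding of j, let η ∼ Ber(p)^ℓ, and let ĵ ∈ {0, ..., ℓ} be any minimizer of the Hamming distance Δ(u ⊕ η, 1^{j'} 0^{ℓ−j'}) over j' ∈ {0, ..., ℓ}. Then Pr_η[ |ĵ − j| ≥ t ] ≤ exp(−c · t). -/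
open MeasureTheory Finset

/-- The unary encoding of j ∈ {0, ..., ℓ}: the string 1^j 0^{ℓ-j} ∈ 𝔽₂^ℓ. -/
def unary (ℓ j : ℕ) : Fin ℓ → ZMod 2 := fun i => if (i : ℕ) < j then 1 else 0

lemma zmod2_cases : ∀ a : ZMod 2, a = 0 ∨ a = 1 := by decide

open Classical in
lemma bern_apply (p : ℝ) (s : Set (ZMod 2)) :
    bern p s = (if (0 : ZMod 2) ∈ s then ENNReal.ofReal (1 - p) else 0)
      + (if (1 : ZMod 2) ∈ s then ENNReal.ofReal p else 0) := by
  have hm : MeasurableSet s := trivial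
  rw [bern, Measure.add_apply, Measure.smul_apply, Measure.smul_apply,
    Measure.dirac_apply' _ hm, Measure.dirac_apply' _ hm]
  by_cases h0 : (0 : ZMod 2) ∈ s <;> by_cases h1 : (1 : ZMod 2) ∈ s <;>
    simp [Set.indicator, h0, h1]

lemma bern_univ (p : ℝ) (hp0 : 0 ≤ p) (hp1 : p ≤ 1) : bern p Set.univ = 1 := by
  rw [bern_apply]
  simp only [Set.mem_univ, if_true]
  rw [← ENNReal.ofReal_add (by linarith) hp0]
  norm_num

lemma bern_one (p : ℝ) : bern p {1} = ENNReal.ofReal p := by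
  rw [bern_apply]
  have h : (0 : ZMod 2) ∉ ({1} : Set (ZMod 2)) := by decide
  simp [h]

lemma bern_zero (p : ℝ) : bern p {0} = ENNReal.ofReal (1 - p) := by
  rw [bern_apply]
  have h : (1 : ZMod 2) ∉ ({0} : Set (ZMod 2)) := by decide
  simp [h]

instance (p : ℝ) : IsFiniteMeasure (bern p) := by
  constructor
  rw [bern_apply]
  simp only [Set.mem_univ, if_true]
  exact ENNReal.add_lt_top.2 ⟨ENNReal.ofReal_lt_top, ENNReal.ofReal_lt_top⟩

/-- cylinder measure -/
lemma bernPi_cyl {ℓ : ℕ} (p : ℝ) (hp0 : 0 ≤ p) (hp1 : p ≤ 1)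
    (W : Finset (Fin ℓ)) (f : Fin ℓ → ZMod 2) :
    bernPi p (Fin ℓ) {η | ∀ i ∈ W, η i = f i} = ∏ i ∈ W, bern p {f i} := by
  have hset : {η : Fin ℓ → ZMod 2 | ∀ i ∈ W, η i = f i}
      = Set.pi Set.univ (fun i => if i ∈ W then {f i} else Set.univ) := by
    ext g
    simp only [Set.mem_setOf_eq, Set.mem_univ_pi]
    constructor
    · intro h i
      by_cases hi : i ∈ W <;> simp [hi, h]
    · intro h i hi
      have := h i
      rw [if_pos hi] at this
      simpa using this
  rw [bernPi, hset, Measure.pi_pi]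
  have : ∀ i ∈ Finset.univ, bern p (if i ∈ W then ({f i} : Set (ZMod 2)) else Set.univ)
      = if i ∈ W then bern p {f i} else 1 := by
    intro i _
    by_cases hi : i ∈ W <;> simp [hi, bern_univ p hp0 hp1]
  rw [Finset.prod_congr rfl this, Finset.prod_ite_mem, Finset.univ_inter]

/-- for k ≤ s ≤ 2k:  p^k (1-p)^(s-k) ≤ √(p(1-p))^s -/
lemma pow_bound (p : ℝ) (hp0 : 0 < p) (hp1 : p < 1/2) (s k : ℕ) (hk : k ≤ s) (h2 : s ≤ 2*k) :
    p ^ k * (1-p) ^ (s-k) ≤ Real.sqrt (p*(1-p)) ^ s := by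
  set r := Real.sqrt (p*(1-p)) with hr
  have hpq : (0:ℝ) < p * (1-p) := by nlinarith
  have hr0 : 0 < r := Real.sqrt_pos.2 hpq
  have hr2 : r ^ 2 = p * (1-p) := Real.sq_sqrt hpq.le
  have hpr : p ≤ r := by
    rw [hr, Real.le_sqrt hp0.le]
    all_goals nlinarith
  set a := s - k with ha
  set d := k - a with hd
  have hka : k = a + d := by omega
  have hs : s = 2*a + d := by omega
  calc p ^ k * (1-p) ^ a = (p * (1-p)) ^ a * p ^ d := by
        rw [hka, pow_add, mul_pow]; ring
    _ = (r^2) ^ a * p ^ d := by rw [hr2]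
    _ ≤ (r^2) ^ a * r ^ d := by
        apply mul_le_mul_of_nonneg_left (pow_le_pow_left₀ hp0.le hpr d)
        positivity
    _ = r ^ s := by rw [hs, ← pow_mul, ← pow_add]

/-- Chernoff-type bound for a window -/
lemma window_bound {ℓ : ℕ} (p : ℝ) (hp0 : 0 < p) (hp1 : p < 1/2) (W : Finset (Fin ℓ)) :
    bernPi p (Fin ℓ) {η | W.card ≤ 2 * (W.filter (fun i => η i = 1)).card} ≤
      ENNReal.ofReal ((2 * Real.sqrt (p * (1 - p))) ^ W.card) := by
  classical
  set r := Real.sqrt (p * (1-p)) with hrdef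
  have hpq : (0:ℝ) < p * (1-p) := by nlinarith
  have hr0 : 0 < r := Real.sqrt_pos.2 hpq
  set s := W.card with hs
  set 𝒯 := W.powerset.filter (fun T => s ≤ 2 * T.card) with hT
  -- containment
  have hsub : {η : Fin ℓ → ZMod 2 | s ≤ 2 * (W.filter (fun i => η i = 1)).card} ⊆
      ⋃ T ∈ 𝒯, {η : Fin ℓ → ZMod 2 | ∀ i ∈ W, η i = if i ∈ T then 1 else 0} := by
    intro η hη
    simp only [Set.mem_setOf_eq] at hη
    refine Set.mem_biUnion (?_ : W.filter (fun i => η i = 1) ∈ 𝒯) ?_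
    · rw [hT, Finset.mem_filter, Finset.mem_powerset]
      exact ⟨Finset.filter_subset _ _, hη⟩
    · intro i hi
      by_cases h1 : η i = 1
      · simp [Finset.mem_filter, hi, h1]
      · have h0 : η i = 0 := (zmod2_cases (η i)).resolve_right h1
        simp [Finset.mem_filter, h1, h0]
  calc bernPi p (Fin ℓ) {η | s ≤ 2 * (W.filter (fun i => η i = 1)).card}
      ≤ ∑ T ∈ 𝒯, bernPi p (Fin ℓ) {η | ∀ i ∈ W, η i = if i ∈ T then 1 else 0} :=
        le_trans (measure_mono hsub) (measure_biUnion_finset_le 𝒯 _)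
    _ ≤ ∑ T ∈ 𝒯, ENNReal.ofReal (r ^ s) := by
        apply Finset.sum_le_sum
        intro T hTmem
        rw [hT, Finset.mem_filter, Finset.mem_powerset] at hTmem
        obtain ⟨hTW, hTcard⟩ := hTmem
        rw [bernPi_cyl p hp0.le (by linarith) W]
        have hprod : ∏ i ∈ W, bern p {if i ∈ T then (1 : ZMod 2) else 0}
            = ENNReal.ofReal p ^ T.card * ENNReal.ofReal (1-p) ^ (W \ T).card := by
          conv_lhs => rw [← Finset.union_sdiff_of_subset hTW]
          rw [Finset.prod_union Finset.disjoint_sdiff]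
          congr 1
          · rw [Finset.prod_congr rfl (fun i hi => by rw [if_pos hi, bern_one])]
            exact Finset.prod_const _
          · rw [Finset.prod_congr rfl (fun i hi => by
              rw [if_neg (Finset.mem_sdiff.1 hi).2, bern_zero])]
            exact Finset.prod_const _
        rw [hprod]
        have hcard : (W \ T).card = s - T.card := by
          rw [Finset.card_sdiff_of_subset hTW]
        rw [hcard, ← ENNReal.ofReal_pow hp0.le, ← ENNReal.ofReal_pow (by linarith),
          ← ENNReal.ofReal_mul (by positivity)]
        exact ENNReal.ofReal_le_ofReal
          (pow_bound p hp0 hp1 s T.card (Finset.card_le_card hTW) hTcard)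
    _ ≤ ∑ T ∈ W.powerset, ENNReal.ofReal (r ^ s) := by
        apply Finset.sum_le_sum_of_subset (Finset.filter_subset _ _)
    _ = (2^s : ℕ) * ENNReal.ofReal (r ^ s) := by
        rw [Finset.sum_const, Finset.card_powerset, nsmul_eq_mul]
    _ ≤ ENNReal.ofReal ((2*r) ^ s) := by
        rw [mul_pow, ENNReal.ofReal_mul (by positivity), ENNReal.ofReal_pow hr0.le,
          ENNReal.ofReal_pow (by norm_num : (0:ℝ) ≤ 2)]
        simp [ENNReal.ofReal_ofNat]

lemma zadd_ne : ∀ a b c : ZMod 2, (a + b ≠ c ↔ b ≠ a + c) := by decide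
lemma zne_one : ∀ a : ZMod 2, (a ≠ 1 ↔ a = 0) := by decide
lemma zne_zero : ∀ a : ZMod 2, (a ≠ 0 ↔ a = 1) := by decide
lemma zadd_eq_one : ∀ a b : ZMod 2, a ≠ b → a + b = 1 := by decide
lemma zadd_eq_zero : ∀ a b : ZMod 2, a = b → a + b = 0 := by decide
lemma zadd_self : ∀ a : ZMod 2, a + a = 0 := by decide

lemma window_card {ℓ : ℕ} {a b : ℕ} (hab : a ≤ b) (hb : b ≤ ℓ) :
    (Finset.univ.filter fun i : Fin ℓ => unary ℓ a i ≠ unary ℓ b i).card = b - a := by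
  classical
  have hpred : ∀ i : Fin ℓ, i ∈ Finset.univ →
      ((unary ℓ a i ≠ unary ℓ b i) ↔ (a ≤ (i:ℕ) ∧ (i:ℕ) < b)) := by
    intro i _
    unfold unary
    have d10 : (1 : ZMod 2) ≠ 0 := by decide
    by_cases h1 : (i:ℕ) < a <;> by_cases h2 : (i:ℕ) < b <;>
      simp [h1, h2, d10] <;> omega
  rw [Finset.filter_congr hpred,
    ← Finset.card_image_of_injective _ Fin.val_injective]
  have himg : (Finset.univ.filter fun i : Fin ℓ => a ≤ (i:ℕ) ∧ (i:ℕ) < b).image Fin.val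
      = Finset.Ico a b := by
    ext x
    simp only [Finset.mem_image, Finset.mem_filter, Finset.mem_univ, true_and, Finset.mem_Ico]
    constructor
    · rintro ⟨i, hi, rfl⟩; exact hi
    · intro hx; exact ⟨⟨x, lt_of_lt_of_le hx.2 hb⟩, hx, rfl⟩
  rw [himg, Nat.card_Ico]

lemma decode_window {ℓ : ℕ} (j j' : ℕ) (η : Fin ℓ → ZMod 2)
    (h : hammingDist (unary ℓ j + η) (unary ℓ j') ≤ hammingDist (unary ℓ j + η) (unary ℓ j)) :
    (Finset.univ.filter fun i : Fin ℓ => unary ℓ j i ≠ unary ℓ j' i).card ≤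
      2 * ((Finset.univ.filter fun i : Fin ℓ => unary ℓ j i ≠ unary ℓ j' i).filter
        (fun i => η i = 1)).card := by
  classical
  set u := unary ℓ j with hu
  set u' := unary ℓ j' with hu'
  set W := Finset.univ.filter (fun i : Fin ℓ => u i ≠ u' i) with hW
  set Wc := (Finset.univ : Finset (Fin ℓ)) \ W with hWc
  have hmemW : ∀ i, i ∈ W → u i ≠ u' i := fun i hi => (Finset.mem_filter.1 hi).2
  have hmemWc : ∀ i, i ∈ Wc → u i = u' i := by
    intro i hi
    have := (Finset.mem_sdiff.1 hi).2
    by_contra hne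
    exact this (Finset.mem_filter.2 ⟨Finset.mem_univ i, hne⟩)
  have hsplit : ∀ (Q : Fin ℓ → Prop) (_ : DecidablePred Q),
      (Finset.univ.filter Q).card = (W.filter Q).card + (Wc.filter Q).card := by
    intro Q _
    rw [← Finset.card_union_of_disjoint
        (Finset.disjoint_filter_filter Finset.disjoint_sdiff),
      ← Finset.filter_union, Finset.union_sdiff_of_subset (Finset.subset_univ W)]
  have hdist1 : hammingDist (u + η) u
      = (W.filter fun i => η i = 1).card + (Wc.filter fun i => η i = 1).card := by
    have e1 : hammingDist (u + η) u = (Finset.univ.filter fun i => η i ≠ 0).card := by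
      simp only [hammingDist, Pi.add_apply]
      congr 1
      apply Finset.filter_congr
      intro i _
      rw [zadd_ne, zadd_self]
    rw [e1, hsplit _ _]
    congr 1
    · exact congrArg Finset.card (Finset.filter_congr (fun i _ => zne_zero (η i)))
    · exact congrArg Finset.card (Finset.filter_congr (fun i _ => zne_zero (η i)))
  have hdist2 : hammingDist (u + η) u'
      = (W.filter fun i => η i = 0).card + (Wc.filter fun i => η i = 1).card := by
    have e1 : hammingDist (u + η) u'
        = (Finset.univ.filter fun i => η i ≠ u i + u' i).card := by
      simp only [hammingDist, Pi.add_apply]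
      congr 1
      exact Finset.filter_congr (fun i _ => zadd_ne (u i) (η i) (u' i))
    rw [e1, hsplit _ _]
    congr 1
    · apply congrArg Finset.card
      apply Finset.filter_congr
      intro i hi
      rw [zadd_eq_one _ _ (hmemW i hi)]
      exact zne_one (η i)
    · apply congrArg Finset.card
      apply Finset.filter_congr
      intro i hi
      rw [zadd_eq_zero _ _ (hmemWc i hi)]
      exact zne_zero (η i)
  have hcardW : W.card = (W.filter fun i => η i = 1).card + (W.filter fun i => η i = 0).card := by
    rw [← Finset.card_filter_add_card_filter_not (p := fun i => η i = 1)]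
    congr 2
    exact Finset.filter_congr (fun i _ => zne_one (η i))
  rw [hdist1, hdist2] at h
  omega

lemma sum_bound (q : ℝ) (hq0 : 0 < q) (hq1 : q < 1) (ℓ j s : ℕ) (hs : 1 ≤ s) (hj : j ≤ ℓ) :
    ∑ j' ∈ (Finset.range (ℓ+1)).filter (fun j' => s ≤ max j j' - min j j'),
      q ^ (max j j' - min j j') ≤ 2 * (1-q)⁻¹ * q ^ s := by
  classical
  have h1q : (0:ℝ) < 1 - q := by linarith
  set S := (Finset.range (ℓ+1)).filter (fun j' => s ≤ max j j' - min j j') with hS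
  have hgeo : ∑ m ∈ Finset.Ico s (ℓ+1), q ^ m ≤ (1-q)⁻¹ * q ^ s := by
    rw [Finset.sum_Ico_eq_sum_range]
    have : ∀ i ∈ Finset.range (ℓ+1-s), q ^ (s + i) = q ^ s * q ^ i := fun i _ => pow_add q s i
    rw [Finset.sum_congr rfl this, ← Finset.mul_sum]
    rw [mul_comm ((1-q)⁻¹) (q^s)]
    apply mul_le_mul_of_nonneg_left _ (by positivity)
    calc ∑ i ∈ Finset.range (ℓ+1-s), q ^ i ≤ ∑' i : ℕ, q ^ i :=
          Summable.sum_le_tsum _ (fun i _ => by positivity) (summable_geometric_of_lt_one hq0.le hq1)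
      _ = (1-q)⁻¹ := tsum_geometric_of_lt_one hq0.le hq1
  have hsum_part : ∀ (c : ℕ → Prop) (_ : DecidablePred c) (g : ℕ → ℕ),
      (∀ a ∈ S.filter c, g a ∈ Finset.Ico s (ℓ+1)) →
      (∀ a ∈ S.filter c, ∀ b ∈ S.filter c, g a = g b → a = b) →
      (∀ a ∈ S.filter c, max j a - min j a = g a) →
      ∑ j' ∈ S.filter c, q ^ (max j j' - min j j') ≤ (1-q)⁻¹ * q ^ s := by
    intro c _ g hmem hinj hval
    calc ∑ j' ∈ S.filter c, q ^ (max j j' - min j j')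
        = ∑ j' ∈ S.filter c, q ^ (g j') := Finset.sum_congr rfl (fun a ha => by rw [hval a ha])
      _ = ∑ m ∈ (S.filter c).image g, q ^ m := (Finset.sum_image hinj).symm
      _ ≤ ∑ m ∈ Finset.Ico s (ℓ+1), q ^ m := by
          apply Finset.sum_le_sum_of_subset_of_nonneg
          · intro m hm
            obtain ⟨a, ha, rfl⟩ := Finset.mem_image.1 hm
            exact hmem a ha
          · intro m _ _; positivity
      _ ≤ (1-q)⁻¹ * q ^ s := hgeo
  have hSmem : ∀ a ∈ S, a ≤ ℓ ∧ s ≤ max j a - min j a := by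
    intro a ha
    rw [hS, Finset.mem_filter, Finset.mem_range] at ha
    exact ⟨by omega, ha.2⟩
  rw [← Finset.sum_filter_add_sum_filter_not S (fun j' => j ≤ j')]
  have hb1 := hsum_part (fun j' => j ≤ j') inferInstance (fun j' => j' - j)
    (by intro a ha
        rw [Finset.mem_filter] at ha
        obtain ⟨haS, hja⟩ := ha
        obtain ⟨haℓ, hsa⟩ := hSmem a haS
        rw [Finset.mem_Ico]; omega)
    (by intro a ha b hb hab
        rw [Finset.mem_filter] at ha hb
        omega)
    (by intro a ha
        rw [Finset.mem_filter] at ha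
        omega)
  have hb2 := hsum_part (fun j' => ¬ j ≤ j') inferInstance (fun j' => j - j')
    (by intro a ha
        rw [Finset.mem_filter] at ha
        obtain ⟨haS, hja⟩ := ha
        obtain ⟨haℓ, hsa⟩ := hSmem a haS
        rw [Finset.mem_Ico]; omega)
    (by intro a ha b hb hab
        rw [Finset.mem_filter] at ha hb
        omega)
    (by intro a ha
        rw [Finset.mem_filter] at ha
        omega)
  linarith

/-- For p ∈ (0,1/2) there are constants c, t₀ > 0 (depending only on p) such that for
every ℓ ≥ 1, j ≤ ℓ, t ≥ t₀, and every minimum-distance decoder `dec` for the unary code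
(dec x minimizes the Hamming distance to a unary codeword), the estimate
ĵ = dec(1^j 0^{ℓ-j} ⊕ η) satisfies Pr_{η ∼ Ber(p)^ℓ}[ |ĵ - j| ≥ t ] ≤ exp(-c·t). -/
theorem stmt9 (p : ℝ) (hp0 : 0 < p) (hp1 : p < 1 / 2) :
    ∃ c t₀ : ℝ, 0 < c ∧ 0 < t₀ ∧
      ∀ ℓ : ℕ, 1 ≤ ℓ → ∀ j : ℕ, j ≤ ℓ → ∀ t : ℝ, t₀ ≤ t →
      ∀ dec : (Fin ℓ → ZMod 2) → ℕ,
        (∀ x, dec x ≤ ℓ ∧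
          ∀ j' : ℕ, j' ≤ ℓ → hammingDist x (unary ℓ (dec x)) ≤ hammingDist x (unary ℓ j')) →
        bernPi p (Fin ℓ) {η | t ≤ |(dec (unary ℓ j + η) : ℝ) - (j : ℝ)|} ≤
          ENNReal.ofReal (Real.exp (-c * t)) := by
  classical
  have hpq : (0:ℝ) < p * (1-p) := by nlinarith
  set q : ℝ := 2 * Real.sqrt (p * (1-p)) with hqdef
  have hq0 : 0 < q := by positivity
  have hq1 : q < 1 := by
    have h2 : q^2 = 4 * (p * (1-p)) := by
      rw [hqdef, mul_pow, Real.sq_sqrt hpq.le]; ring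
    nlinarith [Real.sqrt_nonneg (p*(1-p))]
  have h1q : (0:ℝ) < 1 - q := by linarith
  have hlogq : Real.log q < 0 := Real.log_neg hq0 hq1
  set c : ℝ := (-Real.log q) / 2 with hcdef
  have hc : 0 < c := by rw [hcdef]; linarith
  set K : ℝ := 2 * (1 - q)⁻¹ with hKdef
  have hK0 : 0 < K := by rw [hKdef]; positivity
  refine ⟨c, max 1 (Real.log K / c + 1), hc,
    lt_of_lt_of_le one_pos (le_max_left _ _), ?_⟩
  intro ℓ hℓ j hj t ht dec hdec
  have ht1 : (1:ℝ) ≤ t := le_trans (le_max_left _ _) ht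
  set s := ⌈t⌉₊ with hsdef
  have hts : t ≤ (s:ℝ) := Nat.le_ceil t
  have hs1 : 1 ≤ s := Nat.one_le_ceil_iff.2 (by linarith)
  set S := (Finset.range (ℓ+1)).filter (fun j' => s ≤ max j j' - min j j') with hS
  set F : ℕ → Set (Fin ℓ → ZMod 2) := fun j' =>
    {η | (Finset.univ.filter fun i : Fin ℓ => unary ℓ j i ≠ unary ℓ j' i).card ≤
      2 * ((Finset.univ.filter fun i : Fin ℓ => unary ℓ j i ≠ unary ℓ j' i).filter
        (fun i => η i = 1)).card} with hF
  have habs : ∀ j' : ℕ, |(j':ℝ) - (j:ℝ)| = ((max j j' - min j j' : ℕ) : ℝ) := by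
    intro j'
    rcases le_total j j' with hle | hle
    · rw [max_eq_right hle, min_eq_left hle, Nat.cast_sub hle,
        abs_of_nonneg (by simp [sub_nonneg, Nat.cast_le, hle])]
    · rw [max_eq_left hle, min_eq_right hle, Nat.cast_sub hle,
        abs_of_nonpos (by simp [sub_nonpos, Nat.cast_le, hle])]
      ring
  have hsub : {η : Fin ℓ → ZMod 2 | t ≤ |(dec (unary ℓ j + η) : ℝ) - (j : ℝ)|} ⊆
      ⋃ j' ∈ S, F j' := by
    intro η hη
    simp only [Set.mem_setOf_eq] at hη
    have hj'ℓ : dec (unary ℓ j + η) ≤ ℓ := (hdec _).1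
    rw [habs] at hη
    have hDs : s ≤ max j (dec (unary ℓ j + η)) - min j (dec (unary ℓ j + η)) :=
      Nat.ceil_le.2 hη
    have hmem : dec (unary ℓ j + η) ∈ S := by
      rw [hS]
      exact Finset.mem_filter.2 ⟨Finset.mem_range.2 (Nat.lt_succ_of_le hj'ℓ), hDs⟩
    exact Set.mem_biUnion hmem (decode_window j _ η ((hdec _).2 j hj))
  have hμF : ∀ j' ∈ S, bernPi p (Fin ℓ) (F j') ≤
      ENNReal.ofReal (q ^ (max j j' - min j j')) := by
    intro j' hj'mem
    have hj'ℓ : j' ≤ ℓ := by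
      rw [hS, Finset.mem_filter, Finset.mem_range] at hj'mem
      omega
    have hcard : (Finset.univ.filter fun i : Fin ℓ => unary ℓ j i ≠ unary ℓ j' i).card
        = max j j' - min j j' := by
      rcases le_total j j' with hle | hle
      · rw [window_card hle hj'ℓ, max_eq_right hle, min_eq_left hle]
      · rw [Finset.filter_congr (fun i _ => ne_comm (a := unary ℓ j i)),
          window_card hle hj, max_eq_left hle, min_eq_right hle]
    rw [hF]
    refine le_trans (window_bound p hp0 hp1
      (Finset.univ.filter fun i : Fin ℓ => unary ℓ j i ≠ unary ℓ j' i)) (le_of_eq ?_)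
    rw [hcard, hqdef]
  have hsum := sum_bound q hq0 hq1 ℓ j s hs1 hj
  have hfinal : K * q ^ s ≤ Real.exp (-c * t) := by
    have hq_s : q ^ s = Real.exp ((s:ℝ) * Real.log q) := by
      conv_lhs => rw [← Real.exp_log hq0]
      rw [← Real.exp_nat_mul]
    have h1 : q ^ s ≤ Real.exp (t * Real.log q) := by
      rw [hq_s]
      exact Real.exp_le_exp.2 (by nlinarith)
    have h3 : K ≤ Real.exp (c * t) := by
      have ht2 : Real.log K / c + 1 ≤ t := le_trans (le_max_right _ _) ht
      have : Real.log K ≤ c * t := by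
        have hc' : c ≠ 0 := ne_of_gt hc
        have := mul_le_mul_of_nonneg_left ht2 hc.le
        rw [mul_add, mul_div_cancel₀ _ hc'] at this
        linarith
      calc K = Real.exp (Real.log K) := (Real.exp_log hK0).symm
        _ ≤ Real.exp (c * t) := Real.exp_le_exp.2 this
    calc K * q ^ s ≤ Real.exp (c * t) * Real.exp (t * Real.log q) :=
          mul_le_mul h3 h1 (by positivity) (Real.exp_nonneg _)
      _ = Real.exp (c * t + t * Real.log q) := (Real.exp_add _ _).symm
      _ ≤ Real.exp (-c * t) := by
          apply Real.exp_le_exp.2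
          have hlog2c : Real.log q = -2 * c := by rw [hcdef]; ring
          rw [hlog2c]; ring_nf; linarith
  calc bernPi p (Fin ℓ) {η | t ≤ |(dec (unary ℓ j + η) : ℝ) - (j : ℝ)|}
      ≤ bernPi p (Fin ℓ) (⋃ j' ∈ S, F j') := measure_mono hsub
    _ ≤ ∑ j' ∈ S, bernPi p (Fin ℓ) (F j') := measure_biUnion_finset_le S F
    _ ≤ ∑ j' ∈ S, ENNReal.ofReal (q ^ (max j j' - min j j')) := Finset.sum_le_sum hμF
    _ = ENNReal.ofReal (∑ j' ∈ S, q ^ (max j j' - min j j')) :=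
        (ENNReal.ofReal_sum_of_nonneg (fun i _ => by positivity)).symm
    _ ≤ ENNReal.ofReal (K * q ^ s) := ENNReal.ofReal_le_ofReal (by
        rw [hKdef]
        exact hsum)
    _ ≤ ENNReal.ofReal (Real.exp (-c * t)) := ENNReal.ofReal_le_ofReal hfinal
end

section
/- In the robust Gray code construction, for every i ∈ {0, ..., 2^{kk'} − 2} and all j, j' ∈ {r_i, r_i + 1, ..., r_{i+1}}, the Hamming distance satisfies Δ(G(j), G(j')) = |j − j'| (where G(r_{i+1}) = w_{i+1}). -/
open Finset MeasureTheory

noncomputable section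

namespace RG

/-- The binary reflected (Gray) code R_m : {0, ..., 2^m - 1} → 𝔽₂^m. -/
def brc : (m : ℕ) → ℕ → (Fin m → ZMod 2)
  | 0, _ => Fin.elim0
  | m + 1, i =>
      if i < 2 ^ m then Fin.snoc (brc m i) 0
      else Fin.snoc (brc m (2 ^ (m + 1) - i - 1)) 1

/-- The flip index z_i: the (unique, for 1 ≤ i ≤ 2^K - 1) coordinate at which
R_K(i-1) and R_K(i) differ; z_0 = 0. -/
def zi (K i : ℕ) : ℕ :=
  if h : ∃ z : Fin K, brc K (i - 1) z ≠ brc K i z then (h.choose : ℕ) else 0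

variable {n n' : ℕ}

/-- The i-th codeword c_i = Aᵀ R_K(i) of the concatenated code, presented as its n
inner blocks of length n'. -/
def cw (K : ℕ) (A : Fin K → Fin n → Fin n' → ZMod 2) (i : ℕ) : Fin n → Fin n' → ZMod 2 :=
  ∑ z : Fin K, brc K i z • A z

/-- The length d = n'·n + B·(n+1) + L of the intermediate code and of the Gray code. -/
def D (n n' B L : ℕ) : ℕ := n' * n + B * (n + 1) + L

/-- The i-th intermediate codeword
w_i = L_{z_i} ∘ b_i^B ∘ c_i[1] ∘ b_i^B ∘ ... ∘ b_i^B ∘ c_i[n] ∘ b_i^B, where b_i = i mod 2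
and L_z repeats each of the log₂(K) bits of the binary expansion of z exactly
L / log₂(K) times. -/
def w (B L K : ℕ) (A : Fin K → Fin n → Fin n' → ZMod 2) (i : ℕ) :
    Fin (D n n' B L) → ZMod 2 := fun p =>
  if (p : ℕ) < L then
    (if Nat.testBit (zi K i) ((p : ℕ) / (L / Nat.log 2 K)) then 1 else 0)
  else
    if ((p : ℕ) - L) % (B + n') < B then (i : ZMod 2)
    else
      if hm : ((p : ℕ) - L) / (B + n') < n then
        if hr : ((p : ℕ) - L) % (B + n') - B < n' then
          cw K A i ⟨((p : ℕ) - L) / (B + n'), hm⟩ ⟨((p : ℕ) - L) % (B + n') - B, hr⟩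
        else 0
      else 0

/-- r_i = Σ_{t=1}^{i} Δ(w_{t-1}, w_t). -/
def r (B L K : ℕ) (A : Fin K → Fin n → Fin n' → ZMod 2) (i : ℕ) : ℕ :=
  ∑ t ∈ Finset.Icc 1 i, hammingDist (w B L K A (t - 1)) (w B L K A t)

/-- N = r_{2^K - 1}, the number of codewords of the Gray code. -/
def NN (B L K : ℕ) (A : Fin K → Fin n → Fin n' → ZMod 2) : ℕ := r B L K A (2 ^ K - 1)

/-- For j < N, the index i such that r_i ≤ j < r_{i+1}. -/
def gidx (B L K : ℕ) (A : Fin K → Fin n → Fin n' → ZMod 2) (j : ℕ) : ℕ :=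
  sSup {i | i ≤ 2 ^ K - 1 ∧ r B L K A i ≤ j}

/-- The Gray code G : {0, ..., N-1} → 𝔽₂^d.  With i such that r_i ≤ j < r_{i+1}, G(j)
agrees with w_{i+1} on the first j - r_i coordinates at which w_i and w_{i+1} differ
(and everything before them) and with w_i afterwards. -/
def gray (B L K : ℕ) (A : Fin K → Fin n → Fin n' → ZMod 2) (j : ℕ) :
    Fin (D n n' B L) → ZMod 2 := fun p =>
  if (Finset.univ.filter fun q : Fin (D n n' B L) =>
        q ≤ p ∧ w B L K A (gidx B L K A j) q ≠ w B L K A (gidx B L K A j + 1) q).card ≤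
      j - r B L K A (gidx B L K A j)
  then w B L K A (gidx B L K A j + 1) p
  else w B L K A (gidx B L K A j) p

/-- The index (among the 2n+2 chunks L̃, s_1, c̃_1, s_2, c̃_2, ..., s_n, c̃_n, s_{n+1})
of the chunk containing position p: chunk 0 is L̃, chunk 2m-1 is s_m, chunk 2m is c̃_m,
and chunk 2n+1 is s_{n+1}. -/
def chunkIdx (n' B L : ℕ) (p : ℕ) : ℕ :=
  if p < L then 0
  else 1 + 2 * ((p - L) / (B + n')) + if (p - L) % (B + n') < B then 0 else 1

end RG

end


section AuxRG
open Finset RG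

variable {n n' : ℕ}

lemma filter_le_card_orderIso {d : ℕ} (s : Finset (Fin d)) (t : Fin s.card) :
    (s.filter fun q => q ≤ (s.orderIsoOfFin rfl t : Fin d)).card = (t : ℕ) + 1 := by
  set f := s.orderIsoOfFin rfl with hf
  have himg : s.filter (fun q => q ≤ (f t : Fin d)) =
      (Finset.Iic t).image fun u => (f u : Fin d) := by
    ext q
    simp only [mem_filter, mem_image, mem_Iic]
    constructor
    · rintro ⟨hq, hle⟩
      refine ⟨f.symm ⟨q, hq⟩, ?_, by simp⟩
      rw [← f.le_iff_le]
      simp only [OrderIso.apply_symm_apply]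
      exact hle
    · rintro ⟨u, hu, rfl⟩
      exact ⟨(f u).2, Subtype.coe_le_coe.mpr (f.monotone hu)⟩
  rw [himg, card_image_of_injective _
    (fun u v huv => f.injective (Subtype.coe_injective huv)), Fin.card_Iic]

lemma count_rank {d : ℕ} (s : Finset (Fin d)) (a b : ℕ) (hab : a ≤ b) (hb : b ≤ s.card) :
    (s.filter fun p => a < (s.filter (· ≤ p)).card ∧ (s.filter (· ≤ p)).card ≤ b).card
      = b - a := by
  set f := s.orderIsoOfFin rfl with hf
  have key : s.filter (fun p => a < (s.filter (· ≤ p)).card ∧ (s.filter (· ≤ p)).card ≤ b)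
      = (univ.filter fun u : Fin s.card => a ≤ (u : ℕ) ∧ (u : ℕ) < b).image
          fun u => (f u : Fin d) := by
    ext p
    simp only [mem_filter, mem_image, mem_univ, true_and]
    constructor
    · rintro ⟨hp, h1, h2⟩
      refine ⟨f.symm ⟨p, hp⟩, ?_, by simp⟩
      have hcnt := filter_le_card_orderIso s (f.symm ⟨p, hp⟩)
      rw [← hf] at hcnt
      simp only [OrderIso.apply_symm_apply] at hcnt
      omega
    · rintro ⟨u, hu, rfl⟩
      have hcnt := filter_le_card_orderIso s u
      rw [← hf] at hcnt
      exact ⟨(f u).2, by omega⟩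
  rw [key, card_image_of_injective _
    (fun u v huv => f.injective (Subtype.coe_injective huv))]
  have himg : ((univ.filter fun u : Fin s.card => a ≤ (u : ℕ) ∧ (u : ℕ) < b).image Fin.val)
      = Finset.Ico a b := by
    ext x
    simp only [mem_image, mem_filter, mem_univ, true_and, mem_Ico]
    constructor
    · rintro ⟨u, hu, rfl⟩; exact hu
    · rintro ⟨h1, h2⟩; exact ⟨⟨x, lt_of_lt_of_le h2 hb⟩, ⟨h1, h2⟩, rfl⟩
  rw [← card_image_of_injective _ Fin.val_injective, himg, Nat.card_Ico]

lemma w_apply_parity (B L K : ℕ) (hB : 1 ≤ B)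
    (A : Fin K → Fin n → Fin n' → ZMod 2) (t : ℕ) (hL : L < D n n' B L) :
    w B L K A t ⟨L, hL⟩ = (t : ZMod 2) := by
  unfold RG.w
  simp only [lt_irrefl, if_false, Nat.sub_self, Nat.zero_mod]
  rw [if_pos (show 0 < B from hB)]

lemma w_succ_ne (B L K : ℕ) (hB : 1 ≤ B)
    (A : Fin K → Fin n → Fin n' → ZMod 2) (t : ℕ) :
    w B L K A t ≠ w B L K A (t + 1) := by
  have h1 : 1 ≤ B * (n + 1) := Nat.one_le_iff_ne_zero.mpr (by positivity)
  have hL : L < D n n' B L := by unfold RG.D; omega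
  intro h
  have h2 := congrFun h ⟨L, hL⟩
  rw [w_apply_parity B L K hB A t hL, w_apply_parity B L K hB A (t + 1) hL] at h2
  push_cast at h2
  have : (1 : ZMod 2) = 0 := by linear_combination -h2
  exact one_ne_zero this

lemma r_succ (B L K : ℕ) (A : Fin K → Fin n → Fin n' → ZMod 2) (t : ℕ) :
    r B L K A (t + 1) = r B L K A t + hammingDist (w B L K A t) (w B L K A (t + 1)) := by
  unfold RG.r
  rw [Finset.sum_Icc_succ_top (Nat.le_add_left 1 t)]
  simp

lemma r_strictMono (B L K : ℕ) (hB : 1 ≤ B) (A : Fin K → Fin n → Fin n' → ZMod 2) :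
    StrictMono (r B L K A) := by
  apply strictMono_nat_of_lt_succ
  intro t
  rw [r_succ]
  have : hammingDist (w B L K A t) (w B L K A (t + 1)) ≠ 0 := fun hz =>
    w_succ_ne B L K hB A t (hammingDist_eq_zero.mp hz)
  omega

lemma gidx_eq (B L K : ℕ) (hB : 1 ≤ B) (A : Fin K → Fin n → Fin n' → ZMod 2)
    (i j : ℕ) (hi : i ≤ 2 ^ K - 1)
    (h1 : r B L K A i ≤ j) (h2 : j < r B L K A (i + 1)) :
    gidx B L K A j = i := by
  unfold RG.gidx
  apply IsGreatest.csSup_eq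
  constructor
  · exact ⟨hi, h1⟩
  · rintro i' ⟨-, hri'⟩
    by_contra hgt
    push_neg at hgt
    have := (r_strictMono B L K hB A).monotone (show i + 1 ≤ i' from hgt)
    omega

lemma gray_eq (B L K : ℕ) (hB : 1 ≤ B) (A : Fin K → Fin n → Fin n' → ZMod 2)
    (i j : ℕ) (hK : i + 1 ≤ 2 ^ K - 1)
    (h1 : r B L K A i ≤ j) (h2 : j ≤ r B L K A (i + 1)) (p : Fin (D n n' B L)) :
    gray B L K A j p =
      if (univ.filter fun q => q ≤ p ∧ w B L K A i q ≠ w B L K A (i + 1) q).card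
            ≤ j - r B L K A i
      then w B L K A (i + 1) p else w B L K A i p := by
  rcases h2.lt_or_eq with h2 | h2
  · unfold RG.gray
    rw [gidx_eq B L K hB A i j (by omega) h1 h2]
  · have hg : gidx B L K A j = i + 1 := by
      rw [h2]
      exact gidx_eq B L K hB A (i + 1) _ hK le_rfl
        ((r_strictMono B L K hB A) (Nat.lt_succ_self (i + 1)))
    have hL : gray B L K A j p = w B L K A (i + 1) p := by
      unfold RG.gray
      rw [hg, h2, Nat.sub_self]
      split_ifs with hc
      · have hc0 : (univ.filter fun q => q ≤ p ∧
            w B L K A (i + 1) q ≠ w B L K A (i + 1 + 1) q) = ∅ :=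
          Finset.card_eq_zero.mp (Nat.le_zero.mp hc)
        have hp : p ∉ (∅ : Finset (Fin (D n n' B L))) := Finset.notMem_empty p
        rw [← hc0, mem_filter] at hp
        simp only [mem_univ, true_and, le_refl, not_and, not_not] at hp
        exact hp.symm
      · rfl
    rw [hL, if_pos]
    have hsub : (univ.filter fun q => q ≤ p ∧ w B L K A i q ≠ w B L K A (i + 1) q)
        ⊆ univ.filter fun q => w B L K A i q ≠ w B L K A (i + 1) q := by
      intro q hq
      rw [mem_filter] at hq ⊢
      exact ⟨hq.1, hq.2.2⟩
    have hle := Finset.card_le_card hsub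
    have hdist : (univ.filter fun q => w B L K A i q ≠ w B L K A (i + 1) q).card
        = hammingDist (w B L K A i) (w B L K A (i + 1)) := rfl
    have hr := r_succ B L K A i
    omega

end AuxRG

/-- within one interval [r_i, r_{i+1}], Hamming distance between codewords
of G equals the distance between the indices: Δ(G(j), G(j')) = |j - j'|. -/
theorem stmt17 (k' k n n' B L : ℕ)
    (hk' : 1 ≤ k') (hk : 1 ≤ k) (hn : 1 ≤ n) (hn' : 1 ≤ n') (hB : 1 ≤ B) (hL : 1 ≤ L)
    -- kk' is a power of two and log₂(kk') divides L
    (hpow : ∃ s : ℕ, k * k' = 2 ^ s) (hdvd : Nat.log 2 (k * k') ∣ L)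
    -- the field 𝔽_q with q = 2^{k'}, as an 𝔽₂-algebra
    (Fq : Type) [Field Fq] [Fintype Fq] [DecidableEq Fq] [Algebra (ZMod 2) Fq]
    (hq : Fintype.card Fq = 2 ^ k')
    -- the outer code: a k-dimensional 𝔽_q-linear subspace of 𝔽_q^n
    (Cout : Submodule Fq (Fin n → Fq)) (hCout : Module.finrank Fq ↥Cout = k)
    -- the inner encoding: an injective 𝔽₂-linear map 𝔽_q → 𝔽₂^{n'} (image = C_in)
    (encIn : Fq →ₗ[ZMod 2] (Fin n' → ZMod 2)) (hencIn : Function.Injective encIn)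
    -- A is a full-rank generator matrix of the concatenated code C_out ∘ C_in
    (A : Fin (k * k') → Fin n → Fin n' → ZMod 2)
    (hA : LinearIndependent (ZMod 2) A)
    (hAgen : (Submodule.span (ZMod 2) (Set.range A) : Set (Fin n → Fin n' → ZMod 2)) =
      (fun (σ : Fin n → Fq) (m : Fin n) => encIn (σ m)) '' (Cout : Set (Fin n → Fq))) :
    ∀ i : ℕ, i + 1 ≤ 2 ^ (k * k') - 1 →
      ∀ j j' : ℕ,
        RG.r B L (k * k') A i ≤ j → j ≤ RG.r B L (k * k') A (i + 1) →
        RG.r B L (k * k') A i ≤ j' → j' ≤ RG.r B L (k * k') A (i + 1) →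
        hammingDist (RG.gray B L (k * k') A j) (RG.gray B L (k * k') A j') =
          Nat.dist j j' := by
  classical
  intro i hi j j' hj1 hj2 hj'1 hj'2
  have key : ∀ a b : ℕ, RG.r B L (k * k') A i ≤ a → a ≤ b → b ≤ RG.r B L (k * k') A (i + 1) →
      hammingDist (RG.gray B L (k * k') A a) (RG.gray B L (k * k') A b) = b - a := by
    intro a b ha hab hb
    set s : Finset (Fin (RG.D n n' B L)) :=
      Finset.univ.filter (fun q => RG.w B L (k * k') A i q ≠ RG.w B L (k * k') A (i + 1) q) with hs
    have hcardr : RG.r B L (k * k') A (i + 1) = RG.r B L (k * k') A i + s.card := r_succ B L (k * k') A i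
    have hS : ∀ p : Fin (RG.D n n' B L),
        (Finset.univ.filter fun q => q ≤ p ∧
          RG.w B L (k * k') A i q ≠ RG.w B L (k * k') A (i + 1) q).card = (s.filter (· ≤ p)).card := by
      intro p
      congr 1
      rw [hs, Finset.filter_filter]
      apply Finset.filter_congr
      intro q _
      tauto
    have hfe : (Finset.univ.filter fun p =>
          RG.gray B L (k * k') A a p ≠ RG.gray B L (k * k') A b p)
        = s.filter fun p => a - RG.r B L (k * k') A i < (s.filter (· ≤ p)).card ∧
            (s.filter (· ≤ p)).card ≤ b - RG.r B L (k * k') A i := by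
      ext p
      rw [Finset.mem_filter, Finset.mem_filter, hs, Finset.mem_filter]
      rw [← hs]
      simp only [Finset.mem_univ, true_and]
      rw [gray_eq B L (k * k') hB A i a hi ha (hab.trans hb),
        gray_eq B L (k * k') hB A i b hi (ha.trans hab) hb, hS p]
      rcases le_or_gt ((s.filter (· ≤ p)).card) (a - RG.r B L (k * k') A i) with h1 | h1
      · rw [if_pos h1, if_pos (h1.trans (by omega))]
        simp only [ne_eq, not_true_eq_false, false_iff, not_and]
        intro _ h2
        omega
      · rw [if_neg (by omega)]
        rcases le_or_gt ((s.filter (· ≤ p)).card) (b - RG.r B L (k * k') A i) with h2 | h2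
        · rw [if_pos h2]
          constructor
          · intro hne
            exact ⟨hne, h1, h2⟩
          · rintro ⟨hne, -, -⟩
            exact hne
        · rw [if_neg (by omega)]
          simp only [ne_eq, not_true_eq_false, false_iff, not_and]
          intro _ _
          omega
    have hbcard : b - RG.r B L (k * k') A i ≤ s.card := by omega
    have habc : a - RG.r B L (k * k') A i ≤ b - RG.r B L (k * k') A i := by omega
    have : hammingDist (RG.gray B L (k * k') A a) (RG.gray B L (k * k') A b)
        = (Finset.univ.filter fun p =>
            RG.gray B L (k * k') A a p ≠ RG.gray B L (k * k') A b p).card := rfl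
    rw [this, hfe, count_rank s _ _ habc hbcard]
    omega
  rcases le_total j j' with h | h
  · rw [key j j' hj1 h hj'2, Nat.dist_eq_sub_of_le h]
  · rw [hammingDist_comm, key j' j hj'1 h hj2, Nat.dist_comm, Nat.dist_eq_sub_of_le h]
end
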